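/- arXiv:2406.13707 — 8 statements merged into one kernel-verified Lean document; each statement's English description precedes it below -/
import Mathlib

section
/- Let g_d < 0, g_v < 0, and let r > 1 satisfy r² + r·g_d − g_v = 0, with k_d := −(|g_v|·g_d + r²/4) > 0. Let a_max ≥ 0, let a : ℝ → ℝ satisfy |a(t)| ≤ a_max for all t, and let d̃, ṽ : ℝ → ℝ be differentiable with d̃'(t) = g_d·d̃(t) + ṽ(t) and ṽ'(t) = g_v·d̃(t) − a(t). Define V(t) = ½((r·d̃(t) − ṽ(t))² + |g_v|·d̃(t)² + ṽ(t)²). Then for all t, V'(t) ≤ (1 − r)·(r·d̃(t) − ṽ(t))² − k_d·d̃(t)² + 2·a_max²; in particular V'(t) < 0 whenever |d̃(t)| > √(2·a_max²/k_d) or |r·d̃(t) − ṽ(t)| > √(2·a_max²/(r − 1)). -/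
theorem stmt_3 (g_d g_v r k_d a_max : ℝ) (d v a : ℝ → ℝ)
    (hgd : g_d < 0) (hgv : g_v < 0) (hr : r > 1)
    (hchar : r ^ 2 + r * g_d - g_v = 0)
    (hkd : k_d = -(|g_v| * g_d + r ^ 2 / 4)) (hkdpos : k_d > 0)
    (hamax : a_max ≥ 0) (ha : ∀ t, |a t| ≤ a_max)
    (hd : ∀ t, HasDerivAt d (g_d * d t + v t) t)
    (hv : ∀ t, HasDerivAt v (g_v * d t - a t) t) :
    ∀ t,
      deriv (fun s => (1 / 2) * ((r * d s - v s) ^ 2 + |g_v| * (d s) ^ 2 + (v s) ^ 2)) t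
        ≤ (1 - r) * (r * d t - v t) ^ 2 - k_d * (d t) ^ 2 + 2 * a_max ^ 2
      ∧ ((|d t| > Real.sqrt (2 * a_max ^ 2 / k_d)
          ∨ |r * d t - v t| > Real.sqrt (2 * a_max ^ 2 / (r - 1))) →
        deriv (fun s => (1 / 2) * ((r * d s - v s) ^ 2 + |g_v| * (d s) ^ 2 + (v s) ^ 2)) t < 0) := by
  intro t
  have hdt := hd t
  have hvt := hv t
  have habs : |g_v| = -g_v := abs_of_neg hgv
  have he : HasDerivAt (fun s => r * d s - v s)
      (r * (g_d * d t + v t) - (g_v * d t - a t)) t := (hdt.const_mul r).sub hvt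
  have hV : HasDerivAt (fun s => (1 / 2) * ((r * d s - v s) ^ 2 + |g_v| * (d s) ^ 2 + (v s) ^ 2))
      ((1/2 : ℝ) * ((2 * (r * d t - v t) ^ 1 * (r * (g_d * d t + v t) - (g_v * d t - a t)))
        + |g_v| * (2 * (d t) ^ 1 * (g_d * d t + v t))
        + (2 * (v t) ^ 1 * (g_v * d t - a t)))) t := by
    exact (((he.pow 2).add (((hdt.pow 2).const_mul |g_v|))).add (hvt.pow 2)).const_mul (1/2)
  have hderiv := hV.deriv
  rw [hderiv]
  have haa := abs_le.mp (ha t)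
  have key : (1/2 : ℝ) * ((2 * (r * d t - v t) ^ 1 * (r * (g_d * d t + v t) - (g_v * d t - a t)))
        + |g_v| * (2 * (d t) ^ 1 * (g_d * d t + v t))
        + (2 * (v t) ^ 1 * (g_v * d t - a t)))
      ≤ (1 - r) * (r * d t - v t) ^ 2 - k_d * (d t) ^ 2 + 2 * a_max ^ 2 := by
    rw [habs]
    have hform : (1/2 : ℝ) * ((2 * (r * d t - v t) ^ 1 * (r * (g_d * d t + v t) - (g_v * d t - a t)))
        + -g_v * (2 * (d t) ^ 1 * (g_d * d t + v t))
        + (2 * (v t) ^ 1 * (g_v * d t - a t)))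
        = -r * (r * d t - v t) ^ 2 - g_v * g_d * (d t) ^ 2
          + (2 * (r * d t - v t) - r * d t) * a t := by
      linear_combination ((r * d t - v t) * d t) * hchar
    rw [hform]
    have hA2 : (a t) ^ 2 ≤ a_max ^ 2 := by
      rw [← sq_abs (a t)]
      exact pow_le_pow_left₀ (abs_nonneg _) (ha t) 2
    have hkd' : k_d = g_v * g_d - r ^ 2 / 4 := by rw [hkd, habs]; ring
    nlinarith [sq_nonneg (r * d t - v t - a t), sq_nonneg (r / 2 * d t + a t)]
  refine ⟨key, fun hcase => ?_⟩
  refine lt_of_le_of_lt key ?_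
  have heneg : (1 - r) * (r * d t - v t) ^ 2 ≤ 0 :=
    mul_nonpos_of_nonpos_of_nonneg (by linarith) (sq_nonneg _)
  have hdneg : -k_d * (d t) ^ 2 ≤ 0 := by nlinarith [sq_nonneg (d t)]
  rcases hcase with h | h
  · have hx : (0:ℝ) ≤ 2 * a_max ^ 2 / k_d := by positivity
    have h0 : 0 < |d t| := lt_of_le_of_lt (Real.sqrt_nonneg _) h
    have h2 : 2 * a_max ^ 2 / k_d < |d t| ^ 2 := (Real.sqrt_lt' h0).mp h
    have h3 : 2 * a_max ^ 2 < k_d * (d t) ^ 2 := by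
      rw [← sq_abs (d t)]
      calc 2 * a_max ^ 2 = k_d * (2 * a_max ^ 2 / k_d) := by field_simp
        _ < k_d * |d t| ^ 2 := by exact (mul_lt_mul_iff_right₀ hkdpos).mpr h2
    linarith
  · have hr1 : (0:ℝ) < r - 1 := by linarith
    have h0 : 0 < |r * d t - v t| := lt_of_le_of_lt (Real.sqrt_nonneg _) h
    have h2 : 2 * a_max ^ 2 / (r - 1) < |r * d t - v t| ^ 2 := (Real.sqrt_lt' h0).mp h
    have h3 : 2 * a_max ^ 2 < (r - 1) * (r * d t - v t) ^ 2 := by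
      rw [← sq_abs (r * d t - v t)]
      calc 2 * a_max ^ 2 = (r - 1) * (2 * a_max ^ 2 / (r - 1)) := by field_simp
        _ < (r - 1) * |r * d t - v t| ^ 2 := by exact (mul_lt_mul_iff_right₀ hr1).mpr h2
    nlinarith [sq_nonneg (d t)]
end

section
/- Let g_d < 0 and g_v < 0, and let d̃, ṽ : ℝ → ℝ be differentiable functions satisfying d̃'(t) = g_d·d̃(t) + ṽ(t) and ṽ'(t) = g_v·d̃(t) for all t. Then d̃(t) → 0 and ṽ(t) → 0 as t → +∞. -/
theorem stmt_4 (g_d g_v : ℝ) (hgd : g_d < 0) (hgv : g_v < 0)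
    (d v : ℝ → ℝ)
    (hd : ∀ t, HasDerivAt d (g_d * d t + v t) t)
    (hv : ∀ t, HasDerivAt v (g_v * d t) t) :
    Filter.Tendsto d Filter.atTop (nhds 0) ∧ Filter.Tendsto v Filter.atTop (nhds 0) := by
  set W : ℝ → ℝ := fun s =>
    2 * g_v ^ 2 * d s ^ 2 + (-(2 * (g_d * g_v)) * (d s * v s) + (g_d ^ 2 - 2 * g_v) * v s ^ 2)
    with hWdef
  have hgv2 : 0 < g_v ^ 2 := by nlinarith
  have hgd2 : 0 < g_d ^ 2 := by nlinarith
  have hgdgv : 0 < g_d * g_v := mul_pos_of_neg_of_neg hgd hgv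
  have hpq : 0 < 2 * g_v ^ 2 + g_d * g_v := by
    nlinarith [mul_pos_of_neg_of_neg hgv (show 2 * g_v + g_d < 0 by linarith)]
  have hrq : 0 < g_d ^ 2 - 2 * g_v + g_d * g_v := by nlinarith
  have hnum1 : 0 < -2 * g_d * g_v ^ 2 := by nlinarith
  have hnum2 : 0 < 2 * g_d * g_v := by nlinarith
  have hkpos : 0 < g_v ^ 2 * (g_d ^ 2 - 4 * g_v) := by nlinarith
  set c : ℝ := min ((-2 * g_d * g_v ^ 2) / (2 * g_v ^ 2 + g_d * g_v))
      ((2 * g_d * g_v) / (g_d ^ 2 - 2 * g_v + g_d * g_v)) with hcdef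
  have hc : 0 < c := lt_min (div_pos hnum1 hpq) (div_pos hnum2 hrq)
  have hc1 : c * (2 * g_v ^ 2 + g_d * g_v) ≤ -2 * g_d * g_v ^ 2 :=
    (le_div_iff₀ hpq).1 (min_le_left _ _)
  have hc2 : c * (g_d ^ 2 - 2 * g_v + g_d * g_v) ≤ 2 * g_d * g_v :=
    (le_div_iff₀ hrq).1 (min_le_right _ _)
  -- derivative of W
  have hW : ∀ t, HasDerivAt W
      (2 * g_d * g_v ^ 2 * d t ^ 2 - 2 * g_d * g_v * v t ^ 2) t := by
    intro t
    have h := (((hd t).pow 2).const_mul (2 * g_v ^ 2)).add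
      ((((hd t).mul (hv t)).const_mul (-(2 * (g_d * g_v)))).add
        (((hv t).pow 2).const_mul (g_d ^ 2 - 2 * g_v)))
    convert h using 1
    · rfl
    · rfl
    · rfl
    ring
  -- W is nonnegative
  have hWnonneg : ∀ t, 0 ≤ W t := by
    intro t
    simp only [hWdef]
    nlinarith [sq_nonneg (-(g_d * g_v) * d t + (g_d ^ 2 - 2 * g_v) * v t),
      mul_nonneg hkpos.le (sq_nonneg (d t)), sq_nonneg (d t), sq_nonneg (v t)]
  -- key differential inequality
  have hkey : ∀ t, 2 * g_d * g_v ^ 2 * d t ^ 2 - 2 * g_d * g_v * v t ^ 2 + c * W t ≤ 0 := by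
    intro t
    have hWle : W t ≤ (2 * g_v ^ 2 + g_d * g_v) * d t ^ 2
        + (g_d ^ 2 - 2 * g_v + g_d * g_v) * v t ^ 2 := by
      simp only [hWdef]
      nlinarith [mul_nonneg hgdgv.le (sq_nonneg (d t + v t))]
    have h3 := mul_le_mul_of_nonneg_left hWle hc.le
    nlinarith [mul_le_mul_of_nonneg_right hc1 (sq_nonneg (d t)),
      mul_le_mul_of_nonneg_right hc2 (sq_nonneg (v t))]
  -- exponential decay of W
  have hF : ∀ t, HasDerivAt (fun s => W s * Real.exp (c * s))
      ((2 * g_d * g_v ^ 2 * d t ^ 2 - 2 * g_d * g_v * v t ^ 2) * Real.exp (c * t)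
        + W t * (Real.exp (c * t) * c)) t := by
    intro t
    have hexp : HasDerivAt (fun s : ℝ => Real.exp (c * s)) (Real.exp (c * t) * c) t := by
      have h := (Real.hasDerivAt_exp (c * t)).comp t ((hasDerivAt_id t).const_mul c)
      simpa [Function.comp_def] using h
    exact (hW t).mul hexp
  have hanti : Antitone (fun s => W s * Real.exp (c * s)) := by
    apply antitone_of_hasDerivAt_nonpos hF
    intro t
    have hexp := (Real.exp_pos (c * t)).le
    have h4 := mul_le_mul_of_nonneg_right (hkey t) hexp
    simp only [Pi.zero_apply]
    nlinarith [h4]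
  have hbound : ∀ t ≥ 0, W t ≤ W 0 * Real.exp (-(c * t)) := by
    intro t ht
    have h : W t * Real.exp (c * t) ≤ W 0 * Real.exp (c * 0) := hanti ht
    simp only [mul_zero, Real.exp_zero, mul_one] at h
    have hexp := Real.exp_pos (c * t)
    rw [Real.exp_neg, mul_comm (W 0), ← div_eq_inv_mul, le_div_iff₀ hexp]
    exact h
  -- W → 0
  have hWlim : Filter.Tendsto W Filter.atTop (nhds 0) := by
    apply squeeze_zero' (Filter.Eventually.of_forall hWnonneg)
    · filter_upwards [Filter.eventually_ge_atTop (0 : ℝ)] with t ht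
      exact hbound t ht
    · have h1 : Filter.Tendsto (fun t : ℝ => -(c * t)) Filter.atTop Filter.atBot := by
        apply Filter.tendsto_neg_atBot_iff.2
        exact Filter.Tendsto.const_mul_atTop hc Filter.tendsto_id
      have h2 := Real.tendsto_exp_atBot.comp h1
      have h3 := h2.const_mul (W 0)
      simpa only [Function.comp_def, mul_zero] using h3
  -- squares tend to zero, hence the functions do
  have habs : ∀ (f : ℝ → ℝ), Filter.Tendsto (fun t => f t ^ 2) Filter.atTop (nhds 0) →
      Filter.Tendsto f Filter.atTop (nhds 0) := by
    intro f hf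
    rw [tendsto_zero_iff_abs_tendsto_zero]
    have h := (Real.continuous_sqrt.tendsto 0).comp hf
    simp only [Function.comp_def, Real.sqrt_zero] at h
    rw [show (fun x => Real.sqrt (f x ^ 2)) = fun x => |f x| from
      funext fun x => Real.sqrt_sq_eq_abs _] at h
    exact h
  constructor
  · apply habs
    apply squeeze_zero (fun t => sq_nonneg (d t))
      (g := fun t => (g_d ^ 2 - 2 * g_v) / (g_v ^ 2 * (g_d ^ 2 - 4 * g_v)) * W t)
    · intro t
      simp only [hWdef]
      rw [div_mul_eq_mul_div, le_div_iff₀ hkpos]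
      nlinarith [sq_nonneg (-(g_d * g_v) * d t + (g_d ^ 2 - 2 * g_v) * v t)]
    · have := hWlim.const_mul ((g_d ^ 2 - 2 * g_v) / (g_v ^ 2 * (g_d ^ 2 - 4 * g_v)))
      simpa only [mul_zero] using this
  · apply habs
    apply squeeze_zero (fun t => sq_nonneg (v t))
      (g := fun t => (2 * g_v ^ 2) / (g_v ^ 2 * (g_d ^ 2 - 4 * g_v)) * W t)
    · intro t
      simp only [hWdef]
      rw [div_mul_eq_mul_div, le_div_iff₀ hkpos]
      nlinarith [sq_nonneg (2 * g_v ^ 2 * d t + (-(g_d * g_v)) * v t)]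
    · have := hWlim.const_mul ((2 * g_v ^ 2) / (g_v ^ 2 * (g_d ^ 2 - 4 * g_v)))
      simpa only [mul_zero] using this
end

section
/- Let g_d, g_v, p, r be real numbers with g_v < 0, r = −2p, and r² + r·g_d − g_v = 0. Let ω, a_x, a_y : ℝ → ℝ and let d̃_x, ṽ_x, d̃_y, ṽ_y : ℝ → ℝ be differentiable with d̃_x' = g_d·d̃_x + ṽ_x, ṽ_x' = g_v·d̃_x − a_x + p·ω·d̃_y + ω·ṽ_y, d̃_y' = g_d·d̃_y + ṽ_y, ṽ_y' = g_v·d̃_y − a_y − p·ω·d̃_x − ω·ṽ_x. Define V = ½((r·d̃_x − ṽ_x)² + |g_v|·d̃_x² + ṽ_x²) + ½((r·d̃_y − ṽ_y)² + |g_v|·d̃_y² + ṽ_y²). Then for all t, V'(t) = −r·(r·d̃_x − ṽ_x)² − r·(r·d̃_y − ṽ_y)² + |g_v|·g_d·(d̃_x² + d̃_y²) + (r·d̃_x − 2ṽ_x)·a_x + (r·d̃_y − 2ṽ_y)·a_y; in particular V'(t) does not depend on ω(t). -/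
theorem stmt_6 (g_d g_v p r : ℝ) (hgv : g_v < 0) (hrp : r = -2 * p)
    (hchar : r ^ 2 + r * g_d - g_v = 0)
    (ω ax ay : ℝ → ℝ) (dx vx dy vy : ℝ → ℝ)
    (hdx : ∀ t, HasDerivAt dx (g_d * dx t + vx t) t)
    (hvx : ∀ t, HasDerivAt vx (g_v * dx t - ax t + p * ω t * dy t + ω t * vy t) t)
    (hdy : ∀ t, HasDerivAt dy (g_d * dy t + vy t) t)
    (hvy : ∀ t, HasDerivAt vy (g_v * dy t - ay t - p * ω t * dx t - ω t * vx t) t) :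
    ∀ t, HasDerivAt
      (fun s => (1 / 2) * ((r * dx s - vx s) ^ 2 + |g_v| * (dx s) ^ 2 + (vx s) ^ 2)
        + (1 / 2) * ((r * dy s - vy s) ^ 2 + |g_v| * (dy s) ^ 2 + (vy s) ^ 2))
      (-r * (r * dx t - vx t) ^ 2 - r * (r * dy t - vy t) ^ 2
        + |g_v| * g_d * ((dx t) ^ 2 + (dy t) ^ 2)
        + (r * dx t - 2 * vx t) * ax t + (r * dy t - 2 * vy t) * ay t) t := by
  intro t
  have hgv' : |g_v| = -g_v := abs_of_neg hgv
  have H :=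
    ((((((hdx t).const_mul r).sub (hvx t)).pow 2).add
        (((hdx t).pow 2).const_mul |g_v|)).add ((hvx t).pow 2)).const_mul (1/2 : ℝ) |>.add <|
    ((((((hdy t).const_mul r).sub (hvy t)).pow 2).add
        (((hdy t).pow 2).const_mul |g_v|)).add ((hvy t).pow 2)).const_mul (1/2 : ℝ)
  convert H using 1
  case e'_4 => rfl
  case e'_5 => rfl
  case e'_8 => rfl
  have hp : p = -r / 2 := by linarith [hrp]
  have hg : g_v = r ^ 2 + r * g_d := by linarith [hchar]
  rw [hgv', hp, hg]
  simp only [Pi.sub_apply]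
  ring
end

section
/- In the setting of the estimator error dynamics with angular coupling (d̃_x' = g_d·d̃_x + ṽ_x, ṽ_x' = g_v·d̃_x − a_x + p·ω·d̃_y + ω·ṽ_y, d̃_y' = g_d·d̃_y + ṽ_y, ṽ_y' = g_v·d̃_y − a_y − p·ω·d̃_x − ω·ṽ_x), with g_v < 0, r = −2p, r > 1, r² + r·g_d − g_v = 0, k_d := −(|g_v|·g_d + r²/4), and with a_x(t)² + a_y(t)² ≤ a_max² for all t, the composite Lyapunov function V = ½((r·d̃_x − ṽ_x)² + |g_v|·d̃_x² + ṽ_x²) + ½((r·d̃_y − ṽ_y)² + |g_v|·d̃_y² + ṽ_y²) satisfies, for all t, V'(t) ≤ (1 − r)·((r·d̃_x − ṽ_x)² + (r·d̃_y − ṽ_y)²) − k_d·(d̃_x² + d̃_y²) + 2·a_max². -/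
theorem stmt_7 (g_d g_v p r k_d a_max : ℝ) (hgv : g_v < 0) (hrp : r = -2 * p)
    (hr : r > 1) (hchar : r ^ 2 + r * g_d - g_v = 0)
    (hkd : k_d = -(|g_v| * g_d + r ^ 2 / 4))
    (ω ax ay : ℝ → ℝ) (ha : ∀ t, (ax t) ^ 2 + (ay t) ^ 2 ≤ a_max ^ 2)
    (dx vx dy vy : ℝ → ℝ)
    (hdx : ∀ t, HasDerivAt dx (g_d * dx t + vx t) t)
    (hvx : ∀ t, HasDerivAt vx (g_v * dx t - ax t + p * ω t * dy t + ω t * vy t) t)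
    (hdy : ∀ t, HasDerivAt dy (g_d * dy t + vy t) t)
    (hvy : ∀ t, HasDerivAt vy (g_v * dy t - ay t - p * ω t * dx t - ω t * vx t) t) :
    ∀ t,
      deriv (fun s => (1 / 2) * ((r * dx s - vx s) ^ 2 + |g_v| * (dx s) ^ 2 + (vx s) ^ 2)
        + (1 / 2) * ((r * dy s - vy s) ^ 2 + |g_v| * (dy s) ^ 2 + (vy s) ^ 2)) t
      ≤ (1 - r) * ((r * dx t - vx t) ^ 2 + (r * dy t - vy t) ^ 2)
        - k_d * ((dx t) ^ 2 + (dy t) ^ 2) + 2 * a_max ^ 2 := by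
  intro t
  set dx' := g_d * dx t + vx t with hdx'
  set vx' := g_v * dx t - ax t + p * ω t * dy t + ω t * vy t with hvx'
  set dy' := g_d * dy t + vy t with hdy'
  set vy' := g_v * dy t - ay t - p * ω t * dx t - ω t * vx t with hvy'
  have hV : HasDerivAt (fun s => (1 / 2) * ((r * dx s - vx s) ^ 2 + |g_v| * (dx s) ^ 2 + (vx s) ^ 2)
        + (1 / 2) * ((r * dy s - vy s) ^ 2 + |g_v| * (dy s) ^ 2 + (vy s) ^ 2))
      ((1 / 2) * (2 * (r * dx t - vx t) ^ 1 * (r * dx' - vx')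
          + |g_v| * (2 * dx t ^ 1 * dx') + 2 * vx t ^ 1 * vx')
        + (1 / 2) * (2 * (r * dy t - vy t) ^ 1 * (r * dy' - vy')
          + |g_v| * (2 * dy t ^ 1 * dy') + 2 * vy t ^ 1 * vy')) t := by
    exact (((((((hdx t).const_mul r).sub (hvx t)).pow 2).add
        (((hdx t).pow 2).const_mul |g_v|)).add ((hvx t).pow 2)).const_mul (1/2)).add
      (((((((hdy t).const_mul r).sub (hvy t)).pow 2).add
        (((hdy t).pow 2).const_mul |g_v|)).add ((hvy t).pow 2)).const_mul (1/2))
  rw [hV.deriv]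
  have habs : |g_v| = -g_v := abs_of_neg hgv
  have ha' := ha t
  simp only [hdx', hvx', hdy', hvy', habs, hkd, pow_one]
  rw [show p = -(r/2) by linarith]
  have h1 : (r ^ 2 + r * g_d - g_v) * (dx t * (r * dx t - vx t)) = 0 := by rw [hchar]; ring
  have h2 : (r ^ 2 + r * g_d - g_v) * (dy t * (r * dy t - vy t)) = 0 := by rw [hchar]; ring
  nlinarith [sq_nonneg (r * dx t - vx t - ax t), sq_nonneg (r * dy t - vy t - ay t),
    sq_nonneg (r / 2 * dx t + ax t), sq_nonneg (r / 2 * dy t + ay t), ha t, h1, h2]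
end

section
/- In the setting of the estimator error dynamics with angular coupling and zero predecessor acceleration (a_x ≡ 0, a_y ≡ 0), with g_d < 0, g_v < 0, r = −2p, r > 0, and r² + r·g_d − g_v = 0, the composite Lyapunov function V = ½((r·d̃_x − ṽ_x)² + |g_v|·d̃_x² + ṽ_x²) + ½((r·d̃_y − ṽ_y)² + |g_v|·d̃_y² + ṽ_y²) satisfies V'(t) = −r·(r·d̃_x − ṽ_x)² − r·(r·d̃_y − ṽ_y)² + |g_v|·g_d·(d̃_x² + d̃_y²) ≤ 0 for all t, with V'(t) = 0 if and only if d̃_x(t) = ṽ_x(t) = d̃_y(t) = ṽ_y(t) = 0. -/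
theorem stmt_8 (g_d g_v p r : ℝ) (hgd : g_d < 0) (hgv : g_v < 0)
    (hrp : r = -2 * p) (hr : r > 0) (hchar : r ^ 2 + r * g_d - g_v = 0)
    (ω : ℝ → ℝ) (dx vx dy vy : ℝ → ℝ)
    (hdx : ∀ t, HasDerivAt dx (g_d * dx t + vx t) t)
    (hvx : ∀ t, HasDerivAt vx (g_v * dx t + p * ω t * dy t + ω t * vy t) t)
    (hdy : ∀ t, HasDerivAt dy (g_d * dy t + vy t) t)
    (hvy : ∀ t, HasDerivAt vy (g_v * dy t - p * ω t * dx t - ω t * vx t) t) :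
    ∀ t,
      HasDerivAt
        (fun s => (1 / 2) * ((r * dx s - vx s) ^ 2 + |g_v| * (dx s) ^ 2 + (vx s) ^ 2)
          + (1 / 2) * ((r * dy s - vy s) ^ 2 + |g_v| * (dy s) ^ 2 + (vy s) ^ 2))
        (-r * (r * dx t - vx t) ^ 2 - r * (r * dy t - vy t) ^ 2
          + |g_v| * g_d * ((dx t) ^ 2 + (dy t) ^ 2)) t
      ∧ (-r * (r * dx t - vx t) ^ 2 - r * (r * dy t - vy t) ^ 2
          + |g_v| * g_d * ((dx t) ^ 2 + (dy t) ^ 2) ≤ 0)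
      ∧ ((-r * (r * dx t - vx t) ^ 2 - r * (r * dy t - vy t) ^ 2
          + |g_v| * g_d * ((dx t) ^ 2 + (dy t) ^ 2) = 0)
        ↔ (dx t = 0 ∧ vx t = 0 ∧ dy t = 0 ∧ vy t = 0)) := by
  intro t
  have habs : |g_v| = -g_v := abs_of_neg hgv
  refine ⟨?_, ?_, ?_⟩
  · have Ax := ((((hdx t).const_mul r).sub (hvx t)).pow 2)
    have Bx := ((hdx t).pow 2).const_mul |g_v|
    have Cx := (hvx t).pow 2
    have Ay := ((((hdy t).const_mul r).sub (hvy t)).pow 2)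
    have By := ((hdy t).pow 2).const_mul |g_v|
    have Cy := (hvy t).pow 2
    have H := (((Ax.add Bx).add Cx).const_mul (1/2)).add
      (((Ay.add By).add Cy).const_mul (1/2))
    refine H.congr_deriv ?_
    have hp : p = -r / 2 := by linarith
    have hg : g_v = r ^ 2 + r * g_d := by linarith
    rw [habs]
    subst hp hg
    simp only [Pi.sub_apply]
    ring
  · nlinarith [sq_nonneg (r * dx t - vx t), sq_nonneg (r * dy t - vy t),
      sq_nonneg (dx t), sq_nonneg (dy t),
      mul_nonneg hr.le (sq_nonneg (r * dx t - vx t)),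
      mul_nonneg hr.le (sq_nonneg (r * dy t - vy t)),
      mul_nonneg (mul_nonneg (neg_nonneg.2 hgv.le) (neg_nonneg.2 hgd.le)) (sq_nonneg (dx t)),
      mul_nonneg (mul_nonneg (neg_nonneg.2 hgv.le) (neg_nonneg.2 hgd.le)) (sq_nonneg (dy t))]
  · rw [habs]
    constructor
    · intro h
      have hA : 0 ≤ r * (r * dx t - vx t) ^ 2 := mul_nonneg hr.le (sq_nonneg _)
      have hB : 0 ≤ r * (r * dy t - vy t) ^ 2 := mul_nonneg hr.le (sq_nonneg _)
      have hc : -g_v * g_d < 0 := mul_neg_of_pos_of_neg (neg_pos.2 hgv) hgd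
      have hCx : -g_v * g_d * dx t ^ 2 ≤ 0 :=
        mul_nonpos_of_nonpos_of_nonneg hc.le (sq_nonneg _)
      have hCy : -g_v * g_d * dy t ^ 2 ≤ 0 :=
        mul_nonpos_of_nonpos_of_nonneg hc.le (sq_nonneg _)
      have ex : -g_v * g_d * dx t ^ 2 = 0 := by nlinarith
      have ey : -g_v * g_d * dy t ^ 2 = 0 := by nlinarith
      have hdx0 : dx t = 0 := by
        have := (mul_eq_zero.mp ex).resolve_left hc.ne
        exact pow_eq_zero_iff two_ne_zero |>.mp this
      have hdy0 : dy t = 0 := by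
        have := (mul_eq_zero.mp ey).resolve_left hc.ne
        exact pow_eq_zero_iff two_ne_zero |>.mp this
      have eA : r * (r * dx t - vx t) ^ 2 = 0 := by nlinarith
      have eB : r * (r * dy t - vy t) ^ 2 = 0 := by nlinarith
      have hvx0 : vx t = 0 := by
        have := (mul_eq_zero.mp eA).resolve_left hr.ne'
        have := pow_eq_zero_iff two_ne_zero |>.mp this
        rw [hdx0] at this; linarith
      have hvy0 : vy t = 0 := by
        have := (mul_eq_zero.mp eB).resolve_left hr.ne'
        have := pow_eq_zero_iff two_ne_zero |>.mp this
        rw [hdy0] at this; linarith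
      exact ⟨hdx0, hvx0, hdy0, hvy0⟩
    · rintro ⟨h1, h2, h3, h4⟩
      rw [h1, h2, h3, h4]; ring
end

section
/- Let g_d, d_x, d_y, d_s, v₁y, v̂₁y, E_ω, y_c be real numbers with d_s ≠ 0, d_x ≠ 0, |v₁y − v̂₁y| ≤ E_ω, and y_c ≥ 0. Define s = d_s/|d_s|, h₂ = s·(d_y − d_s), and ω = (v̂₁y − g_d·(d_y − d_s))/d_x − |d_s|·(E_ω + y_c)/(d_s·d_x). Then s·(v₁y − d_x·ω) ≥ g_d·h₂. -/
theorem stmt_15 (g_d d_x d_y d_s v1y v1yhat E_ω y_c : ℝ)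
    (hds : d_s ≠ 0) (hdx : d_x ≠ 0) (hE : |v1y - v1yhat| ≤ E_ω) (hyc : y_c ≥ 0) :
    (d_s / |d_s|) *
        (v1y - d_x * ((v1yhat - g_d * (d_y - d_s)) / d_x - |d_s| * (E_ω + y_c) / (d_s * d_x)))
      ≥ g_d * ((d_s / |d_s|) * (d_y - d_s)) := by
  have h2 := abs_le.mp hE
  have hx2 : 0 < d_x ^ 2 := by positivity
  rcases lt_or_gt_of_ne hds with h | h
  · rw [abs_of_neg h]
    field_simp
    rw [mul_right_comm g_d d_s, mul_div_cancel_right₀ _ hds, mul_div_cancel_left₀ _ hds]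
    nlinarith [mul_nonneg (le_of_lt (mul_pos (neg_pos.mpr h) hx2))
      (show 0 ≤ -(v1y - v1yhat) + E_ω + y_c by linarith)]
  · rw [abs_of_pos h]
    field_simp
    nlinarith [mul_nonneg (le_of_lt (mul_pos h hx2))
      (show 0 ≤ v1y - v1yhat + E_ω + y_c by linarith)]
end

section
/- Let g_d < 0, let n be a natural number, let A, P, Q be real n×n matrices with Aᵀ·P + P·A = −Q and Q positive definite, let e_x, e_y : ℝ → ℝ be differentiable with e_x'(t) = g_d·e_x(t) and e_y'(t) = g_d·e_y(t), and let ẽ : ℝ → ℝⁿ be differentiable with ẽ'(t) = A·ẽ(t). Define V(t) = ½·e_x(t)² + ½·e_y(t)² + ẽ(t)ᵀ·P·ẽ(t). Then V is differentiable with V'(t) = g_d·e_x(t)² + g_d·e_y(t)² − ẽ(t)ᵀ·Q·ẽ(t) ≤ 0 for all t, and V'(t) = 0 if and only if e_x(t) = 0, e_y(t) = 0, and ẽ(t) = 0. -/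
open Matrix

theorem stmt_16 (g_d : ℝ) (hgd : g_d < 0) (n : ℕ)
    (A P Q : Matrix (Fin n) (Fin n) ℝ)
    (hL : Aᵀ * P + P * A = -Q) (hQ : Q.PosDef)
    (ex ey : ℝ → ℝ)
    (hex : ∀ t, HasDerivAt ex (g_d * ex t) t)
    (hey : ∀ t, HasDerivAt ey (g_d * ey t) t)
    (e : ℝ → (Fin n → ℝ))
    (he : ∀ t, HasDerivAt e (A.mulVec (e t)) t) :
    ∀ t,
      HasDerivAt
        (fun s => (1 / 2) * (ex s) ^ 2 + (1 / 2) * (ey s) ^ 2 + e s ⬝ᵥ P.mulVec (e s))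
        (g_d * (ex t) ^ 2 + g_d * (ey t) ^ 2 - e t ⬝ᵥ Q.mulVec (e t)) t
      ∧ (g_d * (ex t) ^ 2 + g_d * (ey t) ^ 2 - e t ⬝ᵥ Q.mulVec (e t) ≤ 0)
      ∧ ((g_d * (ex t) ^ 2 + g_d * (ey t) ^ 2 - e t ⬝ᵥ Q.mulVec (e t) = 0)
          ↔ (ex t = 0 ∧ ey t = 0 ∧ e t = 0)) := by
  intro t
  -- key algebraic identity
  have key : ∀ v : Fin n → ℝ,
      A.mulVec v ⬝ᵥ P.mulVec v + v ⬝ᵥ P.mulVec (A.mulVec v)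
        = -(v ⬝ᵥ Q.mulVec v) := by
    intro v
    have h := congrArg (fun M : Matrix (Fin n) (Fin n) ℝ => v ⬝ᵥ M.mulVec v) hL
    simp only [Matrix.add_mulVec, Matrix.neg_mulVec, dotProduct_add,
      dotProduct_neg, ← Matrix.mulVec_mulVec] at h
    rw [← h]
    congr 1
    rw [Matrix.mulVec_transpose, dotProduct_comm v, ← Matrix.dotProduct_mulVec,
      dotProduct_comm]
  -- derivative of quadratic term
  have hcomp : ∀ i, HasDerivAt (fun s => e s i) (A.mulVec (e t) i) t :=
    fun i => hasDerivAt_pi.mp (he t) i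
  have hq : HasDerivAt (fun s => e s ⬝ᵥ P.mulVec (e s))
      (A.mulVec (e t) ⬝ᵥ P.mulVec (e t) + e t ⬝ᵥ P.mulVec (A.mulVec (e t))) t := by
    have h1 : HasDerivAt (fun s => ∑ i, ∑ j, e s i * (P i j * e s j))
        (∑ i, ∑ j, (A.mulVec (e t) i * (P i j * e t j)
          + e t i * (P i j * A.mulVec (e t) j))) t := by
      apply HasDerivAt.fun_sum
      intro i _
      apply HasDerivAt.fun_sum
      intro j _
      exact (hcomp i).mul ((hcomp j).const_mul (P i j))
    have heq : (fun s => ∑ i, ∑ j, e s i * (P i j * e s j))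
        = fun s => e s ⬝ᵥ P.mulVec (e s) := by
      funext s
      simp [dotProduct, Matrix.mulVec, Finset.mul_sum]
    rw [heq] at h1
    convert h1 using 1
    simp [dotProduct, Matrix.mulVec, Finset.mul_sum, Finset.sum_add_distrib]
  have hd : HasDerivAt
      (fun s => (1 / 2 : ℝ) * (ex s) ^ 2 + (1 / 2) * (ey s) ^ 2 + e s ⬝ᵥ P.mulVec (e s))
      (g_d * (ex t) ^ 2 + g_d * (ey t) ^ 2 - e t ⬝ᵥ Q.mulVec (e t)) t := by
    have h1 := (((hex t).pow 2).const_mul (1/2 : ℝ))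
    have h2 := (((hey t).pow 2).const_mul (1/2 : ℝ))
    have := (h1.add h2).add hq
    refine this.congr_deriv ?_
    rw [key (e t)]
    ring
  refine ⟨hd, ?_, ?_⟩
  · have hx : g_d * (ex t) ^ 2 ≤ 0 :=
      mul_nonpos_iff.mpr (Or.inr ⟨hgd.le, sq_nonneg _⟩)
    have hy : g_d * (ey t) ^ 2 ≤ 0 :=
      mul_nonpos_iff.mpr (Or.inr ⟨hgd.le, sq_nonneg _⟩)
    have hc : 0 ≤ e t ⬝ᵥ Q.mulVec (e t) := by
      have := hQ.posSemidef.dotProduct_mulVec_nonneg (e t)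
      simpa using this
    linarith
  · constructor
    · intro h0
      have hx : g_d * (ex t) ^ 2 ≤ 0 :=
        mul_nonpos_iff.mpr (Or.inr ⟨hgd.le, sq_nonneg _⟩)
      have hy : g_d * (ey t) ^ 2 ≤ 0 :=
        mul_nonpos_iff.mpr (Or.inr ⟨hgd.le, sq_nonneg _⟩)
      have hc : 0 ≤ e t ⬝ᵥ Q.mulVec (e t) := by
        have := hQ.posSemidef.dotProduct_mulVec_nonneg (e t)
        simpa using this
      have hx0 : g_d * (ex t) ^ 2 = 0 := by linarith
      have hy0 : g_d * (ey t) ^ 2 = 0 := by linarith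
      have hc0 : e t ⬝ᵥ Q.mulVec (e t) = 0 := by linarith
      refine ⟨?_, ?_, ?_⟩
      · have := mul_eq_zero.mp hx0
        rcases this with h | h
        · exact absurd h hgd.ne
        · exact pow_eq_zero_iff (by norm_num) |>.mp h
      · have := mul_eq_zero.mp hy0
        rcases this with h | h
        · exact absurd h hgd.ne
        · exact pow_eq_zero_iff (by norm_num) |>.mp h
      · by_contra hne
        have := hQ.dotProduct_mulVec_pos hne
        simp only [star_trivial] at this
        linarith
    · rintro ⟨h1, h2, h3⟩
      simp [h1, h2, h3]
end

section
/- Let g_d < 0, g_v < 0, p, r be real numbers with r = −2p, r > 1, r² + r·g_d − g_v = 0, and k_d := −(|g_v|·g_d + r²/4) ≥ 0. Let a_max ≥ 0 and let ω, a_x, a_y : ℝ → ℝ with a_x(t)² + a_y(t)² ≤ a_max² for all t. Let d̃_x, ṽ_x, d̃_y, ṽ_y : ℝ → ℝ be differentiable satisfying d̃_x' = g_d·d̃_x + ṽ_x, ṽ_x' = g_v·d̃_x − a_x + p·ω·d̃_y + ω·ṽ_y, d̃_y' = g_d·d̃_y + ṽ_y, ṽ_y' = g_v·d̃_y − a_y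 − p·ω·d̃_x − ω·ṽ_x, and let e_x, e_y : ℝ → ℝ be differentiable with e_x' = g_d·e_x and e_y' = g_d·e_y. Define V = ½((r·d̃_x − ṽ_x)² + |g_v|·d̃_x² + ṽ_x²) + ½((r·d̃_y − ṽ_y)² + |g_v|·d̃_y² + ṽ_y²) + ½·e_x² + ½·e_y². Then for all t, V'(t) ≤ (1 − r)·((r·d̃_x − ṽ_x)² + (r·d̃_y − ṽ_y)²) − k_d·(d̃_x² + d̃_y²) + g_d·e_x² + g_d·e_y² + 2·a_max²; in particular V'(t) < 0 whenever |e_x(t)| > √(2·a_max²/(−g_d)) or |e_y(t)| > √(2·a_max²/(−g_d)). -/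
lemma stmt_18_aux (g a z : ℝ) (hg : g < 0)
    (hz : |z| > Real.sqrt (2 * a ^ 2 / (-g))) : g * z ^ 2 + 2 * a ^ 2 < 0 := by
  have hc : (0:ℝ) ≤ 2 * a ^ 2 / (-g) := div_nonneg (by positivity) (by linarith)
  have h2 : 2 * a ^ 2 / (-g) < z ^ 2 := by
    nlinarith [Real.sqrt_nonneg (2 * a ^ 2 / (-g)), Real.sq_sqrt hc, sq_abs z]
  have hcc : (-g) * (2 * a ^ 2 / (-g)) = 2 * a ^ 2 := by
    rw [mul_comm]
    exact div_mul_cancel₀ _ (neg_ne_zero.mpr hg.ne)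
  nlinarith [hg, h2]


set_option maxHeartbeats 1000000 in
theorem stmt_18 (g_d g_v p r k_d a_max : ℝ)
    (hgd : g_d < 0) (hgv : g_v < 0) (hrp : r = -2 * p) (hr : r > 1)
    (hchar : r ^ 2 + r * g_d - g_v = 0)
    (hkd : k_d = -(|g_v| * g_d + r ^ 2 / 4)) (hkdnn : k_d ≥ 0)
    (hamax : a_max ≥ 0)
    (ω ax ay : ℝ → ℝ) (ha : ∀ t, (ax t) ^ 2 + (ay t) ^ 2 ≤ a_max ^ 2)
    (dx vx dy vy : ℝ → ℝ)
    (hdx : ∀ t, HasDerivAt dx (g_d * dx t + vx t) t)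
    (hvx : ∀ t, HasDerivAt vx (g_v * dx t - ax t + p * ω t * dy t + ω t * vy t) t)
    (hdy : ∀ t, HasDerivAt dy (g_d * dy t + vy t) t)
    (hvy : ∀ t, HasDerivAt vy (g_v * dy t - ay t - p * ω t * dx t - ω t * vx t) t)
    (ex ey : ℝ → ℝ)
    (hex : ∀ t, HasDerivAt ex (g_d * ex t) t)
    (hey : ∀ t, HasDerivAt ey (g_d * ey t) t) :
    ∀ t,
      deriv (fun s =>
          (1 / 2) * ((r * dx s - vx s) ^ 2 + |g_v| * (dx s) ^ 2 + (vx s) ^ 2)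
          + (1 / 2) * ((r * dy s - vy s) ^ 2 + |g_v| * (dy s) ^ 2 + (vy s) ^ 2)
          + (1 / 2) * (ex s) ^ 2 + (1 / 2) * (ey s) ^ 2) t
        ≤ (1 - r) * ((r * dx t - vx t) ^ 2 + (r * dy t - vy t) ^ 2)
          - k_d * ((dx t) ^ 2 + (dy t) ^ 2)
          + g_d * (ex t) ^ 2 + g_d * (ey t) ^ 2 + 2 * a_max ^ 2
      ∧ ((|ex t| > Real.sqrt (2 * a_max ^ 2 / (-g_d))
          ∨ |ey t| > Real.sqrt (2 * a_max ^ 2 / (-g_d))) →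
        deriv (fun s =>
          (1 / 2) * ((r * dx s - vx s) ^ 2 + |g_v| * (dx s) ^ 2 + (vx s) ^ 2)
          + (1 / 2) * ((r * dy s - vy s) ^ 2 + |g_v| * (dy s) ^ 2 + (vy s) ^ 2)
          + (1 / 2) * (ex s) ^ 2 + (1 / 2) * (ey s) ^ 2) t < 0) := by
  have hgv' : |g_v| = -g_v := abs_of_neg hgv
  intro t
  have hsx : HasDerivAt (fun s => r * dx s - vx s)
      (r * (g_d * dx t + vx t) - (g_v * dx t - ax t + p * ω t * dy t + ω t * vy t)) t :=
    ((hdx t).const_mul r).sub (hvx t)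
  have hsy : HasDerivAt (fun s => r * dy s - vy s)
      (r * (g_d * dy t + vy t) - (g_v * dy t - ay t - p * ω t * dx t - ω t * vx t)) t :=
    ((hdy t).const_mul r).sub (hvy t)
  have big := (((((hsx.pow 2).add (((hdx t).pow 2).const_mul |g_v|)).add
      ((hvx t).pow 2)).const_mul (1/2)).add
      ((((hsy.pow 2).add (((hdy t).pow 2).const_mul |g_v|)).add
      ((hvy t).pow 2)).const_mul (1/2))).add
      (((hex t).pow 2).const_mul (1/2)) |>.add (((hey t).pow 2).const_mul (1/2))
  have hV' : HasDerivAt (fun s =>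
          (1 / 2) * ((r * dx s - vx s) ^ 2 + |g_v| * (dx s) ^ 2 + (vx s) ^ 2)
          + (1 / 2) * ((r * dy s - vy s) ^ 2 + |g_v| * (dy s) ^ 2 + (vy s) ^ 2)
          + (1 / 2) * (ex s) ^ 2 + (1 / 2) * (ey s) ^ 2)
      ((1/2) * (2*(r*dx t - vx t)*(r*(g_d*dx t + vx t) - (g_v*dx t - ax t + p*ω t*dy t + ω t*vy t))
          + (-g_v)*(2*dx t*(g_d*dx t + vx t)) + 2*vx t*(g_v*dx t - ax t + p*ω t*dy t + ω t*vy t))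
        + (1/2) * (2*(r*dy t - vy t)*(r*(g_d*dy t + vy t) - (g_v*dy t - ay t - p*ω t*dx t - ω t*vx t))
          + (-g_v)*(2*dy t*(g_d*dy t + vy t)) + 2*vy t*(g_v*dy t - ay t - p*ω t*dx t - ω t*vx t))
        + (1/2)*(2*ex t*(g_d*ex t)) + (1/2)*(2*ey t*(g_d*ey t))) t := by
    convert big using 1
    · rfl
    · rfl
    · rfl
    rw [hgv']
    push_cast
    ring
  rw [hV'.deriv]
  rw [hgv'] at hkd
  subst hkd
  subst hrp
  have hg : g_v = (-2*p) ^ 2 + (-2*p) * g_d := by linarith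
  subst hg
  have h1 : (1/2) * (2*(-2*p*dx t - vx t)*(-2*p*(g_d*dx t + vx t) - (((-2*p)^2 + (-2*p)*g_d)*dx t - ax t + p*ω t*dy t + ω t*vy t))
          + (-((-2*p)^2 + (-2*p)*g_d))*(2*dx t*(g_d*dx t + vx t)) + 2*vx t*(((-2*p)^2 + (-2*p)*g_d)*dx t - ax t + p*ω t*dy t + ω t*vy t))
        + (1/2) * (2*(-2*p*dy t - vy t)*(-2*p*(g_d*dy t + vy t) - (((-2*p)^2 + (-2*p)*g_d)*dy t - ay t - p*ω t*dx t - ω t*vx t))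
          + (-((-2*p)^2 + (-2*p)*g_d))*(2*dy t*(g_d*dy t + vy t)) + 2*vy t*(((-2*p)^2 + (-2*p)*g_d)*dy t - ay t - p*ω t*dx t - ω t*vx t))
        + (1/2)*(2*ex t*(g_d*ex t)) + (1/2)*(2*ey t*(g_d*ey t))
      ≤ (1 - (-2*p)) * ((-2*p * dx t - vx t) ^ 2 + (-2*p * dy t - vy t) ^ 2)
          - (-((-(((-2*p)^2 + (-2*p)*g_d))) * g_d + (-2*p) ^ 2 / 4)) * ((dx t) ^ 2 + (dy t) ^ 2)
          + g_d * (ex t) ^ 2 + g_d * (ey t) ^ 2 + 2 * a_max ^ 2 := by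
    nlinarith [sq_nonneg (-2*p*dx t - vx t - ax t), sq_nonneg (-p*dx t + ax t),
      sq_nonneg (-2*p*dy t - vy t - ay t), sq_nonneg (-p*dy t + ay t), ha t]
  refine ⟨h1, ?_⟩
  intro hcase
  have hkey : ∀ z : ℝ, |z| > Real.sqrt (2 * a_max ^ 2 / (-g_d)) →
      g_d * z ^ 2 + 2 * a_max ^ 2 < 0 := fun z hz => stmt_18_aux g_d a_max z hgd hz
  have hA : (1 - (-2*p)) * ((-2*p * dx t - vx t) ^ 2 + (-2*p * dy t - vy t) ^ 2) ≤ 0 :=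
    mul_nonpos_of_nonpos_of_nonneg (by linarith) (by positivity)
  have hB : -(-((-(((-2*p)^2 + (-2*p)*g_d))) * g_d + (-2*p) ^ 2 / 4)) * ((dx t) ^ 2 + (dy t) ^ 2) ≤ 0 := by
    have := mul_nonneg hkdnn (by positivity : (0:ℝ) ≤ (dx t) ^ 2 + (dy t) ^ 2)
    linarith [this]
  have hCx : g_d * (ex t) ^ 2 ≤ 0 := mul_nonpos_of_nonpos_of_nonneg hgd.le (sq_nonneg _)
  have hCy : g_d * (ey t) ^ 2 ≤ 0 := mul_nonpos_of_nonpos_of_nonneg hgd.le (sq_nonneg _)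
  rcases hcase with h | h
  · have := hkey _ h
    linarith [h1, hA, hB, hCy, this]
  · have := hkey _ h
    linarith [h1, hA, hB, hCx, this]
end
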